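/- Let a = (a_{ij}) be a k×k integer matrix with det a ≠ 0, z, w ∈ ℂ^k, and let C, D ∈ ℤ^k, v ∈ ℂ^k satisfy ∑_{j=1}^k a_{ij} v_j = C_iτ + D_i + w_i for all i, with v_j ∉ Λ for every j. Let A, B ∈ ℤ^k and u ∈ ℂ^k satisfy ∑_{i=1}^k u_i a_{ij} = A_jτ + B_j + z_j for all j. Define F(t) = det a · e^{−2πi ∑_i C_i t_i} · ∏_j σ_{v_j}(∑_i t_i a_{ij} − z_j, τ). Then for every t ∈ ℂ^k with ∑_i t_i a_{ij} ∉ Λ for all j, F(t₁+u₁, …, t_k+u_k) = M(u,v) · det a · e^{−2πi ∑_i C_i t_i} · ∏_j σ_{v_j}(∑_i t_i a_{ij}, τ), where M(u,v) = e^{2πi ∑_{i=1}^k (A_i v_i − C_i u_i)}. -/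

import Mathlib

open Complex Filter
open scoped Topology

noncomputable section

/-- The lattice `Λ = ℤτ + ℤ ⊂ ℂ` as a set. -/
def Lam (τ : ℂ) : Set ℂ := {c | ∃ l m : ℤ, c = l * τ + m}

/-- The infinite product `(y;q) = ∏_{j=0}^∞ (1 - y qʲ)`. -/
def qPoch (y q : ℂ) : ℂ := ∏' j : ℕ, (1 - y * q ^ j)

/-- The first Jacobi theta function
`θ(z,τ) = i e^{πi(τ/4 - z)} (x;q)(q/x;q)(q;q)`, `q = e^{2πiτ}`, `x = e^{2πiz}`. -/
def theta (z τ : ℂ) : ℂ :=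
  Complex.I * Complex.exp ((Real.pi : ℂ) * Complex.I * (τ / 4 - z)) *
    qPoch (Complex.exp (2 * (Real.pi : ℂ) * Complex.I * z))
      (Complex.exp (2 * (Real.pi : ℂ) * Complex.I * τ)) *
    qPoch (Complex.exp (2 * (Real.pi : ℂ) * Complex.I * τ) /
        Complex.exp (2 * (Real.pi : ℂ) * Complex.I * z))
      (Complex.exp (2 * (Real.pi : ℂ) * Complex.I * τ)) *
    qPoch (Complex.exp (2 * (Real.pi : ℂ) * Complex.I * τ))
      (Complex.exp (2 * (Real.pi : ℂ) * Complex.I * τ))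

/-- `θ'(z,τ)`, the derivative of `θ` in the `z` variable. -/
def thetaD (z τ : ℂ) : ℂ := deriv (fun u => theta u τ) z

/-- `σ_w(t,τ) = θ(w-t,τ)θ'(0,τ)/(θ(w,τ)θ(t,τ))`. -/
def sigmaW (w t τ : ℂ) : ℂ := theta (w - t) τ * thetaD 0 τ / (theta w τ * theta t τ)


set_option maxHeartbeats 1000000

lemma mult_qPoch {q : ℂ} (hq : ‖q‖ < 1) (y : ℂ) :
    Multipliable (fun j : ℕ => 1 - y * q ^ j) := by
  by_cases h0 : ∃ j0 : ℕ, 1 - y * q ^ j0 = 0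
  · obtain ⟨j0, hj0⟩ := h0
    refine ⟨0, ?_⟩
    rw [HasProd]
    have : ∀ᶠ s : Finset ℕ in atTop, (∏ i ∈ s, (1 - y * q ^ i)) = 0 := by
      filter_upwards [Filter.eventually_ge_atTop ({j0} : Finset ℕ)] with s hs
      exact Finset.prod_eq_zero (hs (Finset.mem_singleton_self j0)) hj0
    show Tendsto _ atTop _
    rw [Filter.tendsto_congr' this]
    exact tendsto_const_nhds
  · push_neg at h0
    have hsum : Summable (fun j : ℕ => Complex.log (1 - y * q ^ j)) := by
      apply Summable.of_norm_bounded_eventually_nat (g := fun j => 3/2 * (‖y‖ * ‖q‖ ^ j))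
      · exact (summable_geometric_of_lt_one (norm_nonneg q) hq).mul_left _ |>.mul_left _
      · have : Tendsto (fun j : ℕ => ‖y‖ * ‖q‖ ^ j) atTop (nhds 0) := by
          simpa using (tendsto_pow_atTop_nhds_zero_of_lt_one (norm_nonneg q) hq).const_mul ‖y‖
        filter_upwards [this.eventually_le_const (by norm_num : (0:ℝ) < 1/2)] with j hj
        have hn : ‖-(y * q ^ j)‖ ≤ 1/2 := by
          rw [norm_neg, norm_mul, norm_pow]; exact hj
        have := Complex.norm_log_one_add_half_le_self hn
        rw [show (1 : ℂ) + -(y * q ^ j) = 1 - y * q ^ j by ring] at this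
        simpa [norm_mul, norm_pow] using this
    have := Complex.multipliable_of_summable_log hsum
    exact this

lemma qPoch_rec {q : ℂ} (hq : ‖q‖ < 1) (y : ℂ) :
    qPoch y q = (1 - y) * qPoch (y * q) q := by
  unfold qPoch
  have h1 : Multipliable (fun n : ℕ => 1 - y * q ^ (n + 1)) :=
    (mult_qPoch hq (y * q)).congr fun n => by rw [pow_succ]; ring_nf
  rw [tprod_eq_zero_mul' h1]
  congr 1
  · simp
  · exact tprod_congr fun j => by rw [pow_succ]; ring_nf

lemma norm_q_lt_one {τ : ℂ} (hτ : 0 < τ.im) :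
    ‖Complex.exp (2 * (Real.pi : ℂ) * Complex.I * τ)‖ < 1 := by
  rw [Complex.norm_exp]
  rw [Real.exp_lt_one_iff]
  have : (2 * (Real.pi : ℂ) * Complex.I * τ).re = -(2 * Real.pi * τ.im) := by
    simp [Complex.mul_re, Complex.mul_im]
  rw [this]
  have := Real.pi_pos
  nlinarith

lemma theta_add_one (z τ : ℂ) : theta (z + 1) τ = - theta z τ := by
  unfold theta
  have h1 : Complex.exp (2 * (Real.pi : ℂ) * Complex.I * (z + 1)) =
      Complex.exp (2 * (Real.pi : ℂ) * Complex.I * z) := by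
    rw [mul_add, Complex.exp_add, mul_one, Complex.exp_two_pi_mul_I, mul_one]
  have h2 : Complex.exp ((Real.pi : ℂ) * Complex.I * (τ / 4 - (z + 1))) =
      - Complex.exp ((Real.pi : ℂ) * Complex.I * (τ / 4 - z)) := by
    have : (Real.pi : ℂ) * Complex.I * (τ / 4 - (z + 1)) =
        (Real.pi : ℂ) * Complex.I * (τ / 4 - z) + (Real.pi : ℂ) * Complex.I * (-1) := by ring
    rw [this, Complex.exp_add]
    have h3 : ((Real.pi : ℂ) * Complex.I * (-1)) = -((Real.pi : ℂ) * Complex.I) := by ring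
    rw [h3, Complex.exp_neg, Complex.exp_pi_mul_I]
    norm_num
  rw [h1, h2]
  ring

lemma theta_add_tau {τ : ℂ} (hτ : 0 < τ.im) (z : ℂ) :
    theta (z + τ) τ =
      - Complex.exp (-((Real.pi : ℂ) * Complex.I) * (τ + 2 * z)) * theta z τ := by
  have hq := norm_q_lt_one hτ
  set q := Complex.exp (2 * (Real.pi : ℂ) * Complex.I * τ) with hqdef
  set x := Complex.exp (2 * (Real.pi : ℂ) * Complex.I * z) with hxdef
  have hx0 : x ≠ 0 := Complex.exp_ne_zero _
  have hq0 : q ≠ 0 := Complex.exp_ne_zero _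
  have hx' : Complex.exp (2 * (Real.pi : ℂ) * Complex.I * (z + τ)) = x * q := by
    rw [mul_add, Complex.exp_add]
  have hqx' : q / (x * q) = 1 / x := by
    field_simp
  unfold theta
  rw [hx', hqx']
  -- qPoch identities
  have e1 : qPoch x q = (1 - x) * qPoch (x * q) q := qPoch_rec hq x
  have e2 : qPoch (1 / x) q = (1 - 1 / x) * qPoch (q / x) q := by
    have := qPoch_rec hq (1 / x)
    rwa [show (1 / x) * q = q / x by field_simp] at this
  rw [e1, e2]
  have e3 : Complex.exp ((Real.pi : ℂ) * Complex.I * (τ / 4 - (z + τ))) * (1 - 1 / x) =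
      - Complex.exp (-((Real.pi : ℂ) * Complex.I) * (τ + 2 * z)) *
        (Complex.exp ((Real.pi : ℂ) * Complex.I * (τ / 4 - z)) * (1 - x)) := by
    have hxinv : (1 : ℂ) / x = Complex.exp (-(2 * (Real.pi : ℂ) * Complex.I * z)) := by
      rw [Complex.exp_neg, one_div]
    rw [hxinv, hxdef]
    rw [show (1 : ℂ) - Complex.exp (-(2 * (Real.pi : ℂ) * Complex.I * z)) =
      - (Complex.exp (-(2 * (Real.pi : ℂ) * Complex.I * z)) *
        (1 - Complex.exp (2 * (Real.pi : ℂ) * Complex.I * z))) by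
        rw [mul_one_sub, ← Complex.exp_add, neg_add_cancel, Complex.exp_zero]; ring]
    have key : Complex.exp ((Real.pi : ℂ) * Complex.I * (τ / 4 - (z + τ))) *
        Complex.exp (-(2 * (Real.pi : ℂ) * Complex.I * z)) =
        Complex.exp (-((Real.pi : ℂ) * Complex.I) * (τ + 2 * z)) *
          Complex.exp ((Real.pi : ℂ) * Complex.I * (τ / 4 - z)) := by
      rw [← Complex.exp_add, ← Complex.exp_add]
      congr 1
      ring
    linear_combination (-(1 - Complex.exp (2 * (Real.pi : ℂ) * Complex.I * z))) * key
  calc Complex.I * Complex.exp ((Real.pi : ℂ) * Complex.I * (τ / 4 - (z + τ))) *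
        qPoch (x * q) q * ((1 - 1 / x) * qPoch (q / x) q) * qPoch q q
      = Complex.I * (Complex.exp ((Real.pi : ℂ) * Complex.I * (τ / 4 - (z + τ))) * (1 - 1 / x)) *
        qPoch (x * q) q * qPoch (q / x) q * qPoch q q := by ring
    _ = _ := by rw [e3]; ring

lemma theta_sub_one (z τ : ℂ) : theta (z - 1) τ = - theta z τ := by
  have h := theta_add_one (z - 1) τ
  rw [sub_add_cancel] at h
  linear_combination h

lemma theta_sub_tau {τ : ℂ} (hτ : 0 < τ.im) (z : ℂ) :
    theta (z - τ) τ =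
      - Complex.exp ((Real.pi : ℂ) * Complex.I * (2 * z - τ)) * theta z τ := by
  have h := theta_add_tau hτ (z - τ)
  rw [sub_add_cancel] at h
  have hmul : Complex.exp (-((Real.pi : ℂ) * Complex.I) * (τ + 2 * (z - τ))) *
      Complex.exp ((Real.pi : ℂ) * Complex.I * (2 * z - τ)) = 1 := by
    rw [← Complex.exp_add, show -((Real.pi : ℂ) * Complex.I) * (τ + 2 * (z - τ)) +
      (Real.pi : ℂ) * Complex.I * (2 * z - τ) = 0 by ring, Complex.exp_zero]
  linear_combination Complex.exp ((Real.pi : ℂ) * Complex.I * (2 * z - τ)) * h -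
    theta (z - τ) τ * hmul

lemma sigmaW_add_one (w t τ : ℂ) : sigmaW w (t + 1) τ = sigmaW w t τ := by
  unfold sigmaW
  rw [show w - (t + 1) = (w - t) - 1 by ring, theta_sub_one, theta_add_one,
    mul_neg, neg_mul, neg_div_neg_eq]

lemma sigmaW_sub_one (w t τ : ℂ) : sigmaW w (t - 1) τ = sigmaW w t τ := by
  have h := sigmaW_add_one w (t - 1) τ
  rw [sub_add_cancel] at h
  exact h.symm

lemma sigmaW_add_tau {τ : ℂ} (hτ : 0 < τ.im) (w t : ℂ) :
    sigmaW w (t + τ) τ =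
      Complex.exp (2 * (Real.pi : ℂ) * Complex.I * w) * sigmaW w t τ := by
  unfold sigmaW
  rw [show w - (t + τ) = (w - t) - τ by ring, theta_sub_tau hτ, theta_add_tau hτ]
  set E1 := Complex.exp ((Real.pi : ℂ) * Complex.I * (2 * (w - t) - τ)) with hE1
  set E2 := Complex.exp (-((Real.pi : ℂ) * Complex.I) * (τ + 2 * t)) with hE2
  have hE : E1 = Complex.exp (2 * (Real.pi : ℂ) * Complex.I * w) * E2 := by
    rw [hE1, hE2, ← Complex.exp_add]
    congr 1
    ring
  have hE2ne : E2 ≠ 0 := Complex.exp_ne_zero _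
  rw [show -E1 * theta (w - t) τ * thetaD 0 τ = -(E1 * theta (w - t) τ * thetaD 0 τ) by ring,
    show theta w τ * (-E2 * theta t τ) = -(theta w τ * (E2 * theta t τ)) by ring,
    neg_div_neg_eq, hE,
    show Complex.exp (2 * (Real.pi : ℂ) * Complex.I * w) * E2 * theta (w - t) τ * thetaD 0 τ =
      E2 * (Complex.exp (2 * (Real.pi : ℂ) * Complex.I * w) * (theta (w - t) τ * thetaD 0 τ))
      by ring,
    show theta w τ * (E2 * theta t τ) = E2 * (theta w τ * theta t τ) by ring,
    mul_div_mul_left _ _ hE2ne, mul_div_assoc]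

lemma sigmaW_sub_tau {τ : ℂ} (hτ : 0 < τ.im) (w t : ℂ) :
    sigmaW w (t - τ) τ =
      Complex.exp (-(2 * (Real.pi : ℂ) * Complex.I * w)) * sigmaW w t τ := by
  have h := sigmaW_add_tau hτ w (t - τ)
  rw [sub_add_cancel] at h
  have hmul : Complex.exp (2 * (Real.pi : ℂ) * Complex.I * w) *
      Complex.exp (-(2 * (Real.pi : ℂ) * Complex.I * w)) = 1 := by
    rw [← Complex.exp_add, add_neg_cancel, Complex.exp_zero]
  linear_combination (-(Complex.exp (-(2 * (Real.pi : ℂ) * Complex.I * w)))) * h -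
    sigmaW w (t - τ) τ * hmul

lemma sigmaW_add_intC (w t τ : ℂ) (m : ℤ) : sigmaW w (t + (m : ℂ)) τ = sigmaW w t τ := by
  induction m using Int.induction_on with
  | zero => simp
  | succ n ih =>
      push_cast at ih ⊢
      rw [show t + ((n : ℂ) + 1) = t + (n : ℂ) + 1 by ring, sigmaW_add_one, ih]
  | pred n ih =>
      push_cast at ih ⊢
      rw [show t + (-(n : ℂ) - 1) = (t + -(n : ℂ)) - 1 by ring, sigmaW_sub_one]
      exact ih

lemma sigmaW_add_int_tau {τ : ℂ} (hτ : 0 < τ.im) (w t : ℂ) (l : ℤ) :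
    sigmaW w (t + (l : ℂ) * τ) τ =
      Complex.exp (2 * (Real.pi : ℂ) * Complex.I * (l : ℂ) * w) * sigmaW w t τ := by
  induction l using Int.induction_on with
  | zero => simp
  | succ n ih =>
      push_cast at ih ⊢
      rw [show t + ((n : ℂ) + 1) * τ = (t + (n : ℂ) * τ) + τ by ring, sigmaW_add_tau hτ,
        ih, ← mul_assoc, ← Complex.exp_add]
      congr 2
      ring
  | pred n ih =>
      push_cast at ih ⊢
      rw [show t + (-(n : ℂ) - 1) * τ = (t + -(n : ℂ) * τ) - τ by ring, sigmaW_sub_tau hτ,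
        ih, ← mul_assoc, ← Complex.exp_add]
      congr 2
      ring

lemma sigmaW_add_lat {τ : ℂ} (hτ : 0 < τ.im) (w t : ℂ) (l m : ℤ) :
    sigmaW w (t + ((l : ℂ) * τ + (m : ℂ))) τ =
      Complex.exp (2 * (Real.pi : ℂ) * Complex.I * (l : ℂ) * w) * sigmaW w t τ := by
  rw [show t + ((l : ℂ) * τ + (m : ℂ)) = (t + (m : ℂ)) + (l : ℂ) * τ by ring,
    sigmaW_add_int_tau hτ, sigmaW_add_intC]

/-- Shifting by a solution `u` of `∑ uᵢaᵢⱼ = Aⱼτ + Bⱼ + zⱼ`: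
`F(t+u) = M(u,v)·det a·e^{-2πi∑Cᵢtᵢ}·∏ σ_{vⱼ}(∑tᵢaᵢⱼ,τ)` with
`M(u,v) = e^{2πi∑(Aᵢvᵢ - Cᵢuᵢ)}`. -/
theorem omega_v_shift (τ : ℂ) (hτ : 0 < τ.im)
    (k : ℕ) (a : Matrix (Fin k) (Fin k) ℤ) (ha : a.det ≠ 0)
    (z w : Fin k → ℂ) (C D : Fin k → ℤ) (v : Fin k → ℂ)
    (hv : ∀ i : Fin k, ∑ j, (a i j : ℂ) * v j = (C i : ℂ) * τ + (D i : ℂ) + w i)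
    (hvL : ∀ j : Fin k, v j ∉ Lam τ)
    (A B : Fin k → ℤ) (u : Fin k → ℂ)
    (hu : ∀ j : Fin k, ∑ i, u i * (a i j : ℂ) = (A j : ℂ) * τ + (B j : ℂ) + z j)
    (F : (Fin k → ℂ) → ℂ)
    (hF : ∀ t : Fin k → ℂ, F t =
      (a.det : ℂ) * Complex.exp (-(2 * (Real.pi : ℂ) * Complex.I) * ∑ i, (C i : ℂ) * t i) *
        ∏ j, sigmaW (v j) ((∑ i, t i * (a i j : ℂ)) - z j) τ)
    (t : Fin k → ℂ)
    (ht : ∀ j : Fin k, (∑ i, t i * (a i j : ℂ)) ∉ Lam τ) :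
    F (fun i => t i + u i) =
      Complex.exp (2 * (Real.pi : ℂ) * Complex.I * ∑ i, ((A i : ℂ) * v i - (C i : ℂ) * u i)) *
        ((a.det : ℂ) *
          Complex.exp (-(2 * (Real.pi : ℂ) * Complex.I) * ∑ i, (C i : ℂ) * t i) *
          ∏ j, sigmaW (v j) (∑ i, t i * (a i j : ℂ)) τ) := by
  rw [hF]
  have harg : ∀ j : Fin k, (∑ i, (t i + u i) * (a i j : ℂ)) - z j
      = (∑ i, t i * (a i j : ℂ)) + ((A j : ℂ) * τ + (B j : ℂ)) := by
    intro j
    have hsum : ∑ i, (t i + u i) * (a i j : ℂ)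
        = (∑ i, t i * (a i j : ℂ)) + ∑ i, u i * (a i j : ℂ) := by
      rw [← Finset.sum_add_distrib]
      exact Finset.sum_congr rfl fun i _ => by ring
    rw [hsum, hu j]
    ring
  have hprod : ∏ j, sigmaW (v j) ((∑ i, (t i + u i) * (a i j : ℂ)) - z j) τ
      = (∏ j, Complex.exp (2 * (Real.pi : ℂ) * Complex.I * (A j : ℂ) * v j)) *
        ∏ j, sigmaW (v j) (∑ i, t i * (a i j : ℂ)) τ := by
    rw [← Finset.prod_mul_distrib]
    refine Finset.prod_congr rfl fun j _ => ?_
    rw [harg j]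
    exact sigmaW_add_lat hτ (v j) _ (A j) (B j)
  have hCsum : ∑ i, (C i : ℂ) * (t i + u i)
      = (∑ i, (C i : ℂ) * t i) + ∑ i, (C i : ℂ) * u i := by
    rw [← Finset.sum_add_distrib]
    exact Finset.sum_congr rfl fun i _ => by ring
  rw [hprod, hCsum]
  have hexp : Complex.exp (-(2 * (Real.pi : ℂ) * Complex.I) *
        ((∑ i, (C i : ℂ) * t i) + ∑ i, (C i : ℂ) * u i)) *
      (∏ j, Complex.exp (2 * (Real.pi : ℂ) * Complex.I * (A j : ℂ) * v j))
      = Complex.exp (2 * (Real.pi : ℂ) * Complex.I *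
          ∑ i, ((A i : ℂ) * v i - (C i : ℂ) * u i)) *
        Complex.exp (-(2 * (Real.pi : ℂ) * Complex.I) * ∑ i, (C i : ℂ) * t i) := by
    rw [← Complex.exp_sum, ← Complex.exp_add, ← Complex.exp_add]
    congr 1
    rw [Finset.sum_sub_distrib,
      show (∑ x : Fin k, 2 * (Real.pi : ℂ) * Complex.I * (A x : ℂ) * v x)
        = 2 * (Real.pi : ℂ) * Complex.I * ∑ x : Fin k, (A x : ℂ) * v x from by
        rw [Finset.mul_sum]; exact Finset.sum_congr rfl fun i _ => by ring]
    ring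
  calc (a.det : ℂ) * Complex.exp (-(2 * (Real.pi : ℂ) * Complex.I) *
        ((∑ i, (C i : ℂ) * t i) + ∑ i, (C i : ℂ) * u i)) *
      ((∏ j, Complex.exp (2 * (Real.pi : ℂ) * Complex.I * (A j : ℂ) * v j)) *
        ∏ j, sigmaW (v j) (∑ i, t i * (a i j : ℂ)) τ)
      = (a.det : ℂ) * (Complex.exp (-(2 * (Real.pi : ℂ) * Complex.I) *
          ((∑ i, (C i : ℂ) * t i) + ∑ i, (C i : ℂ) * u i)) *
        (∏ j, Complex.exp (2 * (Real.pi : ℂ) * Complex.I * (A j : ℂ) * v j))) *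
        ∏ j, sigmaW (v j) (∑ i, t i * (a i j : ℂ)) τ := by ring
    _ = _ := by rw [hexp]; ring
end
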